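/- Let n, k ∈ ℝ³ and Θ ∈ ℝ. If ⟨n,n⟩ = −1 then Tr(exp(Θ J(n))) = 1 + 2 cos Θ; if ⟨n,n⟩ = +1 then Tr(exp(Θ J(n))) = 1 + 2 cosh Θ; and if ⟨k,k⟩ = 0 then Tr(exp(J(k))) = 3. -/

import Mathlib

open Matrix

noncomputable section

/-- Tangent metric `η_T = diag(-1,1,1)` on `ℝ³`. -/
def etaT : Matrix (Fin 3) (Fin 3) ℝ := Matrix.diagonal ![-1, 1, 1]

/-- Tangent bilinear form `⟨u,w⟩ = uᵀ η_T w`. -/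
def ipT (u w : Fin 3 → ℝ) : ℝ := u ⬝ᵥ (etaT *ᵥ w)

/-- The map `J : ℝ³ → M₃(ℝ)` implementing the Lorentzian cross product, `J(u)w = u × w`. -/
def Jmat (u : Fin 3 → ℝ) : Matrix (Fin 3) (Fin 3) ℝ :=
  !![0, u 2, -u 1; u 2, 0, -u 0; -u 1, u 0, 0]

section

attribute [local instance] Matrix.linftyOpNormedRing Matrix.linftyOpNormedAlgebra

def tCLM : Matrix (Fin 3) (Fin 3) ℝ →L[ℝ] ℝ :=
  LinearMap.toContinuousLinearMap (Matrix.traceLinearMap (Fin 3) ℝ ℝ)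

lemma trace_exp_tsum (A : Matrix (Fin 3) (Fin 3) ℝ) :
    (NormedSpace.exp A).trace = ∑' n : ℕ, (((n.factorial : ℝ))⁻¹ * (A ^ n).trace) := by
  have h := (NormedSpace.expSeries_summable' (𝕂 := ℝ) A)
  rw [NormedSpace.exp_eq_tsum ℝ]
  have := tCLM.map_tsum h
  simpa [tCLM, Matrix.trace_smul, smul_eq_mul] using this

end

lemma pow_form (A : Matrix (Fin 3) (Fin 3) ℝ) (δ : ℝ) (h3 : A * A * A = δ • A) (j : ℕ) :
    A ^ (2 * j + 1) = δ ^ j • A ∧ A ^ (2 * j + 2) = δ ^ j • (A * A) := by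
  induction j with
  | zero => simp [pow_succ]
  | succ j ih =>
    constructor
    · have e : 2 * (j + 1) + 1 = (2 * j + 1) + 2 := by ring
      rw [e, pow_add, pow_two, ih.1, smul_mul_assoc, ← mul_assoc, h3, smul_smul, pow_succ]
    · have e : 2 * (j + 1) + 2 = (2 * j + 2) + 2 := by ring
      rw [e, pow_add, pow_two, ih.2, smul_mul_assoc]
      have h4 : A * A * (A * A) = δ • (A * A) := by
        rw [← mul_assoc, h3, smul_mul_assoc]
      rw [h4, smul_smul, pow_succ]

lemma trace_exp_closed (A : Matrix (Fin 3) (Fin 3) ℝ) (δ c : ℝ)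
    (h1 : A.trace = 0) (h2 : (A * A).trace = 2 * δ) (h3 : A * A * A = δ • A)
    (hc : HasSum (fun j : ℕ => 2 * δ ^ (j + 1) / ((2 * (j + 1)).factorial : ℝ)) (c - 3)) :
    (NormedSpace.exp A).trace = c := by
  rw [trace_exp_tsum]
  set f : ℕ → ℝ := fun n => ((n.factorial : ℝ))⁻¹ * (A ^ n).trace with hf
  have hodd : HasSum (fun j : ℕ => f (2 * j + 1)) 0 := by
    have : (fun j : ℕ => f (2 * j + 1)) = fun _ => (0 : ℝ) := by
      funext j
      simp [hf, (pow_form A δ h3 j).1, Matrix.trace_smul, h1]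
    rw [this]; exact hasSum_zero
  have heven : HasSum (fun j : ℕ => f (2 * j)) c := by
    have hshift : HasSum (fun j : ℕ => f (2 * (j + 1))) (c - 3) := by
      have : (fun j : ℕ => f (2 * (j + 1))) =
          fun j : ℕ => 2 * δ ^ (j + 1) / ((2 * (j + 1)).factorial : ℝ) := by
        funext j
        have h2j : 2 * (j + 1) = 2 * j + 2 := by ring
        rw [hf]
        simp only [h2j, (pow_form A δ h3 j).2, Matrix.trace_smul, smul_eq_mul, h2]
        rw [pow_succ]
        field_simp
      rw [this]; exact hc
    have hshift' : HasSum (fun j : ℕ => (fun m => f (2 * m)) (j + 1)) (c - 3) := hshift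
    have h4 := (hasSum_nat_add_iff (f := fun j : ℕ => f (2 * j)) 1).mp hshift'
    have hf0 : f 0 = 3 := by simp [hf, Matrix.trace_one]
    have hval : c - 3 + ∑ i ∈ Finset.range 1, f (2 * i) = c := by
      simp [hf0]
    rwa [hval] at h4
  have := heven.even_add_odd hodd
  rw [add_zero] at this
  exact this.tsum_eq

lemma Jmat_trace (u : Fin 3 → ℝ) : (Jmat u).trace = 0 := by
  simp [Jmat, Matrix.trace_fin_three]

lemma ipT_eq (u : Fin 3 → ℝ) : ipT u u = -(u 0)^2 + (u 1)^2 + (u 2)^2 := by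
  simp [ipT, etaT, dotProduct, Matrix.mulVec, Fin.sum_univ_three, Matrix.diagonal]
  ring

lemma Jmat_sq_trace (u : Fin 3 → ℝ) : ((Jmat u) * (Jmat u)).trace = 2 * ipT u u := by
  rw [ipT_eq]
  simp [Jmat, Matrix.trace_fin_three, Matrix.mul_apply, Fin.sum_univ_three]
  ring

lemma Jmat_cube (u : Fin 3 → ℝ) : (Jmat u) * (Jmat u) * (Jmat u) = ipT u u • Jmat u := by
  rw [ipT_eq]
  ext i j
  fin_cases i <;> fin_cases j <;>
    simp [Jmat, Matrix.mul_apply, Fin.sum_univ_three] <;> ring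

/-- Traces of face holonomies: `Tr exp(Θ J(n)) = 1 + 2cos Θ` for timelike `n`,
`1 + 2cosh Θ` for spacelike `n`, and `Tr exp(J(k)) = 3` for null `k`. -/
theorem trace_exp_J (n k : Fin 3 → ℝ) (Θ : ℝ) :
    (ipT n n = -1 → (NormedSpace.exp (Θ • Jmat n)).trace = 1 + 2 * Real.cos Θ) ∧
    (ipT n n = 1 → (NormedSpace.exp (Θ • Jmat n)).trace = 1 + 2 * Real.cosh Θ) ∧
    (ipT k k = 0 → (NormedSpace.exp (Jmat k)).trace = 3) := by
  have hcube : ∀ (u : Fin 3 → ℝ) (Θ : ℝ),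
      (Θ • Jmat u) * (Θ • Jmat u) * (Θ • Jmat u)
        = (Θ ^ 2 * ipT u u) • (Θ • Jmat u) := by
    intro u Θ
    have e : (Θ • Jmat u) * (Θ • Jmat u) * (Θ • Jmat u)
        = (Θ ^ 3) • (Jmat u * Jmat u * Jmat u) := by
      simp only [smul_mul_assoc, mul_smul_comm, smul_smul]
      congr 1
      ring
    rw [e, Jmat_cube, smul_smul, smul_smul]
    congr 1
    ring
  have hsq : ∀ (u : Fin 3 → ℝ) (Θ : ℝ),
      ((Θ • Jmat u) * (Θ • Jmat u)).trace = 2 * (Θ ^ 2 * ipT u u) := by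
    intro u Θ
    rw [Matrix.smul_mul, Matrix.mul_smul, Matrix.trace_smul, Matrix.trace_smul,
      smul_eq_mul, smul_eq_mul, Jmat_sq_trace]
    ring
  refine ⟨?_, ?_, ?_⟩
  · intro h
    apply trace_exp_closed (Θ • Jmat n) (-Θ ^ 2) _
    · simp [Matrix.trace_smul, Jmat_trace]
    · rw [hsq, h]; ring
    · rw [hcube, h]; congr 1; ring
    · have hcos := Real.hasSum_cos Θ
      have hval : Real.cos Θ = (Real.cos Θ - 1) + ∑ i ∈ Finset.range 1,
          ((-1 : ℝ) ^ i * Θ ^ (2 * i) / ((2 * i).factorial : ℝ)) := by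
        simp
      rw [hval] at hcos
      have hs := ((hasSum_nat_add_iff 1).mpr hcos).mul_left 2
      have hfun : (fun j : ℕ =>
            2 * ((-1 : ℝ) ^ (j + 1) * Θ ^ (2 * (j + 1)) / ((2 * (j + 1)).factorial : ℝ)))
          = fun j : ℕ => 2 * (-Θ ^ 2) ^ (j + 1) / ((2 * (j + 1)).factorial : ℝ) := by
        funext j
        conv_rhs => rw [neg_pow, ← pow_mul]
        ring
      rw [hfun] at hs
      have hv2 : 2 * (Real.cos Θ - 1) = 1 + 2 * Real.cos Θ - 3 := by ring
      rw [hv2] at hs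
      exact hs
  · intro h
    apply trace_exp_closed (Θ • Jmat n) (Θ ^ 2) _
    · simp [Matrix.trace_smul, Jmat_trace]
    · rw [hsq, h]; ring
    · rw [hcube, h]; congr 1; ring
    · have hcosh := Real.hasSum_cosh Θ
      have hval : Real.cosh Θ = (Real.cosh Θ - 1) + ∑ i ∈ Finset.range 1,
          (Θ ^ (2 * i) / ((2 * i).factorial : ℝ)) := by
        simp
      rw [hval] at hcosh
      have hs := ((hasSum_nat_add_iff 1).mpr hcosh).mul_left 2
      have hfun : (fun j : ℕ =>
            2 * (Θ ^ (2 * (j + 1)) / ((2 * (j + 1)).factorial : ℝ)))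
          = fun j : ℕ => 2 * (Θ ^ 2) ^ (j + 1) / ((2 * (j + 1)).factorial : ℝ) := by
        funext j
        conv_rhs => rw [← pow_mul]
        ring
      rw [hfun] at hs
      have hv2 : 2 * (Real.cosh Θ - 1) = 1 + 2 * Real.cosh Θ - 3 := by ring
      rw [hv2] at hs
      exact hs
  · intro h
    apply trace_exp_closed (Jmat k) 0 _ (Jmat_trace k)
    · rw [Jmat_sq_trace, h]
    · rw [Jmat_cube, h]
    · simpa using hasSum_zero
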